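/- Let A = ⟨Q, Σ, δ_Q, q^i, δ_W⟩ be a PDFA such that for every state q ∈ Q there exists a sequence u ∈ Σ* of non-zero transitions from q reaching a stopping state (Π_{i=1}^{|u|} δ_W(δ̂(q, u_{:i−1}), u_i) > 0 and δ_W(δ̂(q, u), $) > 0). Then for every w ∈ Σ*, the prefix probability of the distribution P_A equals the product of the transition weights along w: Σ_{v∈Σ*} P_A(w·v) = Π_{i=1}^{|w|} δ_W(δ̂(w_{:i−1}), w_i). -/

import Mathlib

/-- The probability `P_A(w)` assigned to a sequence `w` by a PDFA with transition
function `δQ`, weight function `δW` (with `none` playing the role of the stopping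
symbol `$`), and initial state `qi`. -/
noncomputable def pdfaProb {Q α : Type*} (δQ : Q → α → Q) (δW : Q → Option α → ℝ)
    (qi : Q) (w : List α) : ℝ :=
  δW (List.foldl δQ qi w) none *
    ∏ i : Fin w.length, δW (List.foldl δQ qi (w.take i.1)) (some (w.get i))

namespace PdfaAux

open Finset

variable {Q α : Type*} (δQ : Q → α → Q) (δW : Q → Option α → ℝ)

/-- weight product along `w` starting at `q`. -/
noncomputable def wprod (q : Q) (w : List α) : ℝ :=
  ∏ i : Fin w.length, δW (List.foldl δQ q (w.take i.1)) (some (w.get i))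

lemma wprod_nil (q : Q) : wprod δQ δW q [] = 1 := by simp [wprod]

lemma wprod_cons (q : Q) (a : α) (w : List α) :
    wprod δQ δW q (a :: w) = δW q (some a) * wprod δQ δW (δQ q a) w := by
  unfold wprod
  rw [show (∏ i : Fin (a :: w).length, δW (List.foldl δQ q (List.take (↑i) (a :: w)))
        (some ((a :: w).get i))) =
      ∏ i : Fin (w.length + 1), δW (List.foldl δQ q (List.take (↑i) (a :: w)))
        (some ((a :: w).get i)) from rfl, Fin.prod_univ_succ]
  congr 1

lemma pdfaProb_eq (q : Q) (w : List α) :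
    pdfaProb δQ δW q w = δW (List.foldl δQ q w) none * wprod δQ δW q w := rfl

lemma pdfaProb_nil (q : Q) : pdfaProb δQ δW q [] = δW q none := by
  simp [pdfaProb_eq, wprod_nil]

lemma pdfaProb_cons (q : Q) (a : α) (v : List α) :
    pdfaProb δQ δW q (a :: v) = δW q (some a) * pdfaProb δQ δW (δQ q a) v := by
  rw [pdfaProb_eq, pdfaProb_eq, wprod_cons]
  simp [List.foldl_cons]
  ring

lemma pdfaProb_append (q : Q) (w v : List α) :
    pdfaProb δQ δW q (w ++ v) =
      wprod δQ δW q w * pdfaProb δQ δW (List.foldl δQ q w) v := by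
  induction w generalizing q with
  | nil => simp [wprod_nil]
  | cons a w ih =>
      rw [List.cons_append, pdfaProb_cons, ih, wprod_cons]
      simp [List.foldl_cons]
      ring

lemma wprod_nonneg (hW01 : ∀ q σ, 0 ≤ δW q σ ∧ δW q σ ≤ 1) (q : Q) (w : List α) :
    0 ≤ wprod δQ δW q w :=
  Finset.prod_nonneg fun i _ => (hW01 _ _).1

lemma pdfaProb_nonneg (hW01 : ∀ q σ, 0 ≤ δW q σ ∧ δW q σ ≤ 1) (q : Q) (w : List α) :
    0 ≤ pdfaProb δQ δW q w :=
  mul_nonneg (hW01 _ _).1 (wprod_nonneg δQ δW hW01 q w)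

section ENN

open ENNReal

variable [Fintype Q] [Fintype α]

/-- transition weights in `ℝ≥0∞`. -/
noncomputable def gE (q : Q) (σ : Option α) : ℝ≥0∞ := ENNReal.ofReal (δW q σ)

/-- sequence probability in `ℝ≥0∞`. -/
noncomputable def GE (q : Q) (v : List α) : ℝ≥0∞ := ENNReal.ofReal (pdfaProb δQ δW q v)

/-- weight product in `ℝ≥0∞`. -/
noncomputable def WE (q : Q) (v : List α) : ℝ≥0∞ := ENNReal.ofReal (wprod δQ δW q v)

/-- total mass from `q` in `ℝ≥0∞`. -/
noncomputable def fE (q : Q) : ℝ≥0∞ := ∑' v : List α, GE δQ δW q v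

variable (hW01 : ∀ q σ, 0 ≤ δW q σ ∧ δW q σ ≤ 1) (hWsum : ∀ q : Q, ∑ σ : Option α, δW q σ = 1)

include hW01

lemma GE_nil (q : Q) : GE δQ δW q [] = gE δW q none := by
  simp [GE, gE, pdfaProb_nil]

lemma WE_nil (q : Q) : WE δQ δW q [] = 1 := by simp [WE, wprod_nil]

lemma GE_cons (q : Q) (a : α) (v : List α) :
    GE δQ δW q (a :: v) = gE δW q (some a) * GE δQ δW (δQ q a) v := by
  rw [GE, pdfaProb_cons, ENNReal.ofReal_mul (hW01 q (some a)).1]; rfl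

lemma WE_cons (q : Q) (a : α) (v : List α) :
    WE δQ δW q (a :: v) = gE δW q (some a) * WE δQ δW (δQ q a) v := by
  rw [WE, wprod_cons, ENNReal.ofReal_mul (hW01 q (some a)).1]; rfl

include hWsum

lemma gE_sum (q : Q) : ∑ σ : Option α, gE δW q σ = 1 := by
  simp only [gE]
  rw [← ENNReal.ofReal_sum_of_nonneg (fun σ _ => (hW01 q σ).1), hWsum q, ENNReal.ofReal_one]

omit hWsum

lemma gE_le_one (q : Q) (σ : Option α) : gE δW q σ ≤ 1 := by
  rw [gE, ← ENNReal.ofReal_one]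
  exact ENNReal.ofReal_le_ofReal (hW01 q σ).2

/-- mass of sequences of length exactly `n` from `q`. -/
noncomputable def SL (n : ℕ) (q : Q) : ℝ≥0∞ := ∑ f : Fin n → α, GE δQ δW q (List.ofFn f)

/-- mass still alive at time `n` from `q`. -/
noncomputable def DL (n : ℕ) (q : Q) : ℝ≥0∞ := ∑ f : Fin n → α, WE δQ δW q (List.ofFn f)

omit hW01 in
lemma SL_zero (q : Q) : SL δQ δW 0 q = GE δQ δW q [] := by
  simp [SL, List.ofFn_zero]

lemma DL_zero (q : Q) : DL δQ δW 0 q = 1 := by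
  simp [DL, List.ofFn_zero, WE_nil δQ δW hW01]

lemma SL_succ (n : ℕ) (q : Q) :
    SL δQ δW (n + 1) q = ∑ a : α, gE δW q (some a) * SL δQ δW n (δQ q a) := by
  rw [SL]
  rw [← Fintype.sum_equiv (Fin.consEquiv (fun _ : Fin (n + 1) => α))
    (fun p : α × (Fin n → α) => GE δQ δW q (List.ofFn ((Fin.consEquiv (fun _ : Fin (n + 1) => α)) p)))
    (fun f => GE δQ δW q (List.ofFn f)) (fun p => rfl)]
  rw [Fintype.sum_prod_type]
  apply Finset.sum_congr rfl
  intro a _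
  rw [SL, Finset.mul_sum]
  apply Finset.sum_congr rfl
  intro g _
  rw [show List.ofFn ((Fin.consEquiv (fun _ : Fin (n + 1) => α)) (a, g)) = a :: List.ofFn g by
    rw [List.ofFn_succ]; rfl]
  exact GE_cons δQ δW hW01 q a (List.ofFn g)

lemma DL_succ (n : ℕ) (q : Q) :
    DL δQ δW (n + 1) q = ∑ a : α, gE δW q (some a) * DL δQ δW n (δQ q a) := by
  rw [DL]
  rw [← Fintype.sum_equiv (Fin.consEquiv (fun _ : Fin (n + 1) => α))
    (fun p : α × (Fin n → α) => WE δQ δW q (List.ofFn ((Fin.consEquiv (fun _ : Fin (n + 1) => α)) p)))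
    (fun f => WE δQ δW q (List.ofFn f)) (fun p => rfl)]
  rw [Fintype.sum_prod_type]
  apply Finset.sum_congr rfl
  intro a _
  rw [DL, Finset.mul_sum]
  apply Finset.sum_congr rfl
  intro g _
  rw [show List.ofFn ((Fin.consEquiv (fun _ : Fin (n + 1) => α)) (a, g)) = a :: List.ofFn g by
    rw [List.ofFn_succ]; rfl]
  exact WE_cons δQ δW hW01 q a (List.ofFn g)

include hWsum

lemma mass (n : ℕ) : ∀ q : Q, (∑ k ∈ Finset.range n, SL δQ δW k q) + DL δQ δW n q = 1 := by
  induction n with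
  | zero => intro q; simp [DL_zero δQ δW hW01]
  | succ n ih =>
      intro q
      rw [Finset.sum_range_succ']
      have h1 : ∀ k, SL δQ δW (k + 1) q = ∑ a : α, gE δW q (some a) * SL δQ δW k (δQ q a) :=
        fun k => SL_succ δQ δW hW01 k q
      calc (∑ k ∈ Finset.range n, SL δQ δW (k + 1) q + SL δQ δW 0 q) + DL δQ δW (n + 1) q
          = SL δQ δW 0 q + ((∑ k ∈ Finset.range n, ∑ a : α, gE δW q (some a) * SL δQ δW k (δQ q a))
              + ∑ a : α, gE δW q (some a) * DL δQ δW n (δQ q a)) := by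
            rw [DL_succ δQ δW hW01]
            simp only [h1]
            ring
        _ = SL δQ δW 0 q + ∑ a : α, gE δW q (some a) *
              ((∑ k ∈ Finset.range n, SL δQ δW k (δQ q a)) + DL δQ δW n (δQ q a)) := by
            rw [Finset.sum_comm]
            rw [← Finset.sum_add_distrib]
            congr 1
            apply Finset.sum_congr rfl
            intro a _
            rw [mul_add, Finset.mul_sum]
        _ = gE δW q none + ∑ a : α, gE δW q (some a) := by
            rw [SL_zero, GE_nil δQ δW hW01]
            congr 1
            apply Finset.sum_congr rfl
            intro a _
            rw [ih (δQ q a), mul_one]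
        _ = 1 := by rw [← Fintype.sum_option]; exact gE_sum (δW := δW) (hW01 := hW01) (hWsum := hWsum) q

omit hW01 hWsum in
lemma fE_eq_tsum_SL (q : Q) : fE δQ δW q = ∑' n, SL δQ δW n q := by
  rw [fE, ← Equiv.tsum_eq (List.equivSigmaTuple (α := α)).symm (fun v => GE δQ δW q v)]
  rw [show (fun s : Σ n, Fin n → α => GE δQ δW q ((List.equivSigmaTuple (α := α)).symm s)) =
    fun s : Σ n, Fin n → α => GE δQ δW q (List.ofFn s.2) from rfl]
  rw [ENNReal.tsum_sigma']
  apply tsum_congr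
  intro n
  rw [tsum_fintype]
  rfl

lemma fE_le_one (q : Q) : fE δQ δW q ≤ 1 := by
  rw [fE_eq_tsum_SL]
  apply ENNReal.tsum_le_of_sum_range_le
  intro n
  calc ∑ k ∈ Finset.range n, SL δQ δW k q
      ≤ (∑ k ∈ Finset.range n, SL δQ δW k q) + DL δQ δW n q := le_self_add
    _ = 1 := mass (δQ := δQ) (δW := δW) (hW01 := hW01) (hWsum := hWsum) n q


omit hW01 hWsum

/-- Splitting a tsum over `Option β` in `ℝ≥0∞`. -/
lemma tsum_option_split {β : Type*} (f : Option β → ℝ≥0∞) :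
    ∑' o : Option β, f o = f none + ∑' b : β, f (some b) := by
  rw [ENNReal.tsum_eq_add_tsum_ite none]
  congr 1
  have hsupp : Function.support (fun o : Option β =>
      @ite _ (o = none) (Classical.propDecidable _) 0 (f o)) ⊆
      Set.range (some : β → Option β) := by
    intro x hx
    rcases x with _ | b
    · simp [Function.support] at hx
    · exact ⟨b, rfl⟩
  have h2 := (Option.some_injective β).tsum_eq
    (f := fun o : Option β => @ite _ (o = none) (Classical.propDecidable _) 0 (f o)) hsupp
  have h3 : ∑' (c : β), (fun o : Option β =>
      @ite _ (o = none) (Classical.propDecidable _) 0 (f o)) (some c) =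
      ∑' b : β, f (some b) := tsum_congr fun b => if_neg (by simp)
  exact h2.symm.trans h3

/-- Lists are `[]` or a cons. -/
def listConsEquiv {β : Type*} : Option (β × List β) ≃ List β where
  toFun o := match o with
    | none => []
    | some (a, v) => a :: v
  invFun l := match l with
    | [] => none
    | a :: v => some (a, v)
  left_inv o := by rcases o with _ | ⟨a, v⟩ <;> rfl
  right_inv l := by cases l <;> rfl

include hW01 in
lemma fE_rec (q : Q) :
    fE δQ δW q = gE δW q none + ∑ a : α, gE δW q (some a) * fE δQ δW (δQ q a) := by
  classical
  rw [fE, ← Equiv.tsum_eq (listConsEquiv (β := α)) (fun v => GE δQ δW q v),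
    tsum_option_split]
  congr 1
  · exact GE_nil δQ δW hW01 q
  · calc (∑' p : α × List α, GE δQ δW q (listConsEquiv (some p)))
        = ∑' p : α × List α, gE δW q (some p.1) * GE δQ δW (δQ q p.1) p.2 := by
          apply tsum_congr
          intro p
          exact GE_cons δQ δW hW01 q p.1 p.2
      _ = ∑' (a : α), ∑' (v : List α), gE δW q (some a) * GE δQ δW (δQ q a) v :=
          ENNReal.tsum_prod'
      _ = ∑ a : α, gE δW q (some a) * fE δQ δW (δQ q a) := by
          rw [tsum_fintype]
          apply Finset.sum_congr rfl
          intro a _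
          rw [ENNReal.tsum_mul_left, fE]

include hW01 hWsum in
lemma fE_ne_top (q : Q) : fE δQ δW q ≠ ⊤ :=
  ne_top_of_le_ne_top ENNReal.one_ne_top
    (fE_le_one (δQ := δQ) (δW := δW) (hW01 := hW01) (hWsum := hWsum) q)

/-- the real total mass -/
noncomputable def rQ (q : Q) : ℝ := (fE δQ δW q).toReal

lemma rQ_nonneg (q : Q) : 0 ≤ rQ δQ δW q := ENNReal.toReal_nonneg

include hW01 hWsum in
lemma rQ_le_one (q : Q) : rQ δQ δW q ≤ 1 := by
  rw [rQ, ← ENNReal.toReal_one]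
  exact ENNReal.toReal_mono ENNReal.one_ne_top
    (fE_le_one (δQ := δQ) (δW := δW) (hW01 := hW01) (hWsum := hWsum) q)

include hW01 hWsum in
lemma rQ_rec (q : Q) :
    rQ δQ δW q = δW q none + ∑ a : α, δW q (some a) * rQ δQ δW (δQ q a) := by
  have hnn : ∀ a : α, 0 ≤ δW q (some a) * rQ δQ δW (δQ q a) :=
    fun a => mul_nonneg (hW01 q (some a)).1 ENNReal.toReal_nonneg
  have h : fE δQ δW q =
      ENNReal.ofReal (δW q none + ∑ a : α, δW q (some a) * rQ δQ δW (δQ q a)) := by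
    rw [fE_rec δQ δW hW01 q,
      ENNReal.ofReal_add (hW01 q none).1 (Finset.sum_nonneg fun a _ => hnn a),
      ENNReal.ofReal_sum_of_nonneg (fun a _ => hnn a)]
    congr 1
    apply Finset.sum_congr rfl
    intro a _
    rw [ENNReal.ofReal_mul (hW01 q (some a)).1, rQ,
      ENNReal.ofReal_toReal
        (fE_ne_top (δQ := δQ) (δW := δW) (hW01 := hW01) (hWsum := hWsum) (δQ q a))]
    rfl
  rw [rQ, h, ENNReal.toReal_ofReal
    (add_nonneg (hW01 q none).1 (Finset.sum_nonneg fun a _ => hnn a))]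

include hW01 hWsum in
/-- the defect recursion -/
lemma defect_rec (q : Q) :
    1 - rQ δQ δW q = ∑ a : α, δW q (some a) * (1 - rQ δQ δW (δQ q a)) := by
  have h1 : (1 : ℝ) = δW q none + ∑ a : α, δW q (some a) := by
    rw [← Fintype.sum_option]; exact (hWsum q).symm
  have h2 := rQ_rec (δQ := δQ) (δW := δW) (hW01 := hW01) (hWsum := hWsum) q
  calc 1 - rQ δQ δW q
      = ∑ a : α, (δW q (some a) - δW q (some a) * rQ δQ δW (δQ q a)) := by
        rw [Finset.sum_sub_distrib]
        rw [h2]; rw [h1]; ring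
    _ = ∑ a : α, δW q (some a) * (1 - rQ δQ δW (δQ q a)) := by
        apply Finset.sum_congr rfl
        intro a _
        ring

include hW01 hWsum in
lemma rQ_eq_one (hreach : ∀ q : Q, ∃ u : List α,
      0 < ∏ i : Fin u.length, δW (List.foldl δQ q (u.take i.1)) (some (u.get i)) ∧
      0 < δW (List.foldl δQ q u) none) (q : Q) : rQ δQ δW q = 1 := by
  obtain ⟨q0, -, hq0⟩ := Finset.exists_max_image Finset.univ
    (fun q' => 1 - rQ δQ δW q') ⟨q, Finset.mem_univ q⟩
  have hq0' : ∀ q' : Q, 1 - rQ δQ δW q' ≤ 1 - rQ δQ δW q0 :=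
    fun q' => hq0 q' (Finset.mem_univ q')
  set M : ℝ := 1 - rQ δQ δW q0 with hM
  have hM0 : M ≤ 0 := by
    by_contra hc
    push_neg at hc
    -- Claim A: at any maximizer, the stop weight vanishes and positive transitions
    -- lead to maximizers.
    have claimA : ∀ p : Q, 1 - rQ δQ δW p = M →
        δW p none = 0 ∧ ∀ a : α, 0 < δW p (some a) → 1 - rQ δQ δW (δQ p a) = M := by
      intro p hp
      have e1 : M = ∑ a : α, δW p (some a) * (1 - rQ δQ δW (δQ p a)) := by
        rw [← hp]
        exact defect_rec (δQ := δQ) (δW := δW) (hW01 := hW01) (hWsum := hWsum) p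
      have le1 : ∑ a : α, δW p (some a) * (1 - rQ δQ δW (δQ p a)) ≤
          ∑ a : α, δW p (some a) * M :=
        Finset.sum_le_sum fun a _ =>
          mul_le_mul_of_nonneg_left (hq0' (δQ p a)) (hW01 p (some a)).1
      have h1 : (1 : ℝ) = δW p none + ∑ a : α, δW p (some a) := by
        rw [← Fintype.sum_option]; exact (hWsum p).symm
      have e2 : ∑ a : α, δW p (some a) * M = (1 - δW p none) * M := by
        rw [← Finset.sum_mul]
        congr 1
        linarith
      have hnone : δW p none = 0 := by nlinarith [(hW01 p none).1]
      refine ⟨hnone, ?_⟩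
      have e3 : ∑ a : α, δW p (some a) * (M - (1 - rQ δQ δW (δQ p a))) = 0 := by
        have : ∑ a : α, δW p (some a) * (M - (1 - rQ δQ δW (δQ p a))) =
            ∑ a : α, δW p (some a) * M -
              ∑ a : α, δW p (some a) * (1 - rQ δQ δW (δQ p a)) := by
          rw [← Finset.sum_sub_distrib]
          apply Finset.sum_congr rfl
          intro a _
          ring
        rw [this, e2, hnone]
        linarith
      intro a ha
      have hterm := (Finset.sum_eq_zero_iff_of_nonneg fun a _ =>
        mul_nonneg (hW01 p (some a)).1 (by linarith [hq0' (δQ p a)])).1 e3 a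
        (Finset.mem_univ a)
      have := mul_eq_zero.1 hterm
      rcases this with h | h
      · exact absurd h (ne_of_gt ha)
      · linarith
    -- Claim B: maximality propagates along positive-weight paths.
    have claimB : ∀ u : List α, ∀ p : Q, 1 - rQ δQ δW p = M →
        0 < wprod δQ δW p u → 1 - rQ δQ δW (List.foldl δQ p u) = M := by
      intro u
      induction u with
      | nil => intro p hp _; simpa using hp
      | cons a u ih =>
          intro p hp hw
          rw [wprod_cons] at hw
          have ha : 0 < δW p (some a) := by
            rcases (hW01 p (some a)).1.lt_or_eq with h | h
            · exact h
            · rw [← h, zero_mul] at hw; exact absurd hw (lt_irrefl 0)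
          have hwu : 0 < wprod δQ δW (δQ p a) u := by
            rcases (wprod_nonneg δQ δW hW01 (δQ p a) u).lt_or_eq with h | h
            · exact h
            · rw [← h, mul_zero] at hw; exact absurd hw (lt_irrefl 0)
          exact ih (δQ p a) ((claimA p hp).2 a ha) hwu
    obtain ⟨u, hu1, hu2⟩ := hreach q0
    have hend := claimB u q0 rfl hu1
    have := (claimA _ hend).1
    linarith
  have h1 : 1 - rQ δQ δW q ≤ 0 := le_trans (hq0' q) hM0
  have h2 := rQ_le_one (δQ := δQ) (δW := δW) (hW01 := hW01) (hWsum := hWsum) q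
  linarith

end ENN

end PdfaAux

/-- for a PDFA in which every state can reach, by non-zero transitions, a
state with positive stopping weight, the prefix probability of `P_A` at any `w ∈ Σ*`
equals the product of the transition weights along `w`:
`∑_{v∈Σ*} P_A(w·v) = Π_{i=1}^{|w|} δ_W(δ̂(w_{:i−1}), w_i)`. -/
theorem pdfa_prefix_prob_eq_weight_product {Q α : Type*} [Fintype Q] [Fintype α]
    (δQ : Q → α → Q) (qi : Q) (δW : Q → Option α → ℝ)
    (hW01 : ∀ q σ, 0 ≤ δW q σ ∧ δW q σ ≤ 1)
    (hWsum : ∀ q : Q, ∑ σ : Option α, δW q σ = 1)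
    (hreach : ∀ q : Q, ∃ u : List α,
      0 < ∏ i : Fin u.length, δW (List.foldl δQ q (u.take i.1)) (some (u.get i)) ∧
      0 < δW (List.foldl δQ q u) none) :
    ∀ w : List α,
      ∑' v : List α, pdfaProb δQ δW qi (w ++ v) =
        ∏ i : Fin w.length, δW (List.foldl δQ qi (w.take i.1)) (some (w.get i)) := by
  intro w
  set q' := List.foldl δQ qi w with hq'
  have hone : ∑' v : List α, pdfaProb δQ δW q' v = 1 := by
    have h1 : ∀ v : List α, pdfaProb δQ δW q' v = (PdfaAux.GE δQ δW q' v).toReal :=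
      fun v => (ENNReal.toReal_ofReal (PdfaAux.pdfaProb_nonneg δQ δW hW01 q' v)).symm
    calc ∑' v : List α, pdfaProb δQ δW q' v
        = ∑' v : List α, (PdfaAux.GE δQ δW q' v).toReal := tsum_congr h1
      _ = (∑' v : List α, PdfaAux.GE δQ δW q' v).toReal :=
          (ENNReal.tsum_toReal_eq (fun _ => ENNReal.ofReal_ne_top)).symm
      _ = (PdfaAux.fE δQ δW q').toReal := rfl
      _ = 1 := PdfaAux.rQ_eq_one (δQ := δQ) (δW := δW) (hW01 := hW01)
          (hWsum := hWsum) hreach q'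
  calc ∑' v : List α, pdfaProb δQ δW qi (w ++ v)
      = ∑' v : List α, PdfaAux.wprod δQ δW qi w * pdfaProb δQ δW q' v :=
        tsum_congr fun v => PdfaAux.pdfaProb_append δQ δW qi w v
    _ = PdfaAux.wprod δQ δW qi w * ∑' v : List α, pdfaProb δQ δW q' v := tsum_mul_left
    _ = PdfaAux.wprod δQ δW qi w := by rw [hone, mul_one]
    _ = ∏ i : Fin w.length, δW (List.foldl δQ qi (w.take i.1)) (some (w.get i)) := rfl
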